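/- Let F be a preordered semifield of characteristic zero with 1 ≥ 0, and let x ∈ F be nonzero with x ≥ 0 and x^{-1} ≥ 0. Then for every rational ε > 0 there holds x + x^{-1} + ε ≥ 2, i.e. x + x^{-1} ≥ 2 holds in the closure of the order. -/

import Mathlib

open Finset in
private lemma stmt7_sum_le_sum {F : Type*} [AddCommMonoid F] [Preorder F]
    (hadd : ∀ a b c : F, a ≤ b → a + c ≤ b + c)
    {ι : Type*} (s : Finset ι) (f g : ι → F) :
    (∀ i ∈ s, f i ≤ g i) → ∑ i ∈ s, f i ≤ ∑ i ∈ s, g i := by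
  classical
  induction s using Finset.induction_on with
  | empty => simp
  | @insert a s hni ih =>
      intro h
      rw [Finset.sum_insert hni, Finset.sum_insert hni]
      have h1 := h a (Finset.mem_insert_self a s)
      have h2 := ih (fun i hi => h i (Finset.mem_insert_of_mem hi))
      calc f a + ∑ i ∈ s, f i ≤ g a + ∑ i ∈ s, f i := hadd _ _ _ h1
        _ ≤ g a + ∑ i ∈ s, g i := by
            rw [add_comm (g a), add_comm (g a)]; exact hadd _ _ _ h2

/-- In a preordered semifield of characteristic zero with `1 ≥ 0`, for nonzero `x` with
`x ≥ 0` and `x⁻¹ ≥ 0`, one has `x + x⁻¹ + ε ≥ 2` for every rational `ε > 0`. -/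
theorem stmt7 {F : Type*} [Semifield F] [CharZero F] [Preorder F]
    (hadd : ∀ a b c : F, a ≤ b → a + c ≤ b + c)
    (hmul : ∀ a b c : F, a ≤ b → a * c ≤ b * c)
    (h10 : (0 : F) ≤ 1) (x : F) (hx : x ≠ 0) (hx0 : (0 : F) ≤ x) (hxi0 : (0 : F) ≤ x⁻¹) :
    ∀ ε : ℚ≥0, 0 < ε → (2 : F) ≤ x + x⁻¹ + (ε : F) := by
  classical
  -- everything is nonnegative
  have h0 : ∀ c : F, (0 : F) ≤ c := fun c => by simpa using hmul 0 1 c h10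
  have le_add_right : ∀ a c : F, a ≤ a + c := fun a c => by
    have := hadd 0 c a (h0 c)
    simpa [add_comm] using this
  have add_le_add_left' : ∀ a c d : F, c ≤ d → a + c ≤ a + d := fun a c d h => by
    have := hadd c d a h
    simpa [add_comm] using this
  have hmono : ∀ (a b : ℕ) (y : F), a ≤ b → (a : F) * y ≤ (b : F) * y := by
    intro a b y hab
    have hb : (b : F) = (a : F) + ((b - a : ℕ) : F) := by
      rw [← Nat.cast_add]; congr 1; omega
    rw [hb, add_mul]
    exact le_add_right _ _
  have hxx : x * x⁻¹ = 1 := mul_inv_cancel₀ hx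
  intro ε hε
  -- choose n with 1 ≤ n and 2/n ≤ ε
  obtain ⟨n, hn1, hnε⟩ : ∃ n : ℕ, 1 ≤ n ∧ (2 : ℚ≥0) / n ≤ ε := by
    obtain ⟨n, hn⟩ := exists_nat_gt ((2 : ℚ≥0) / ε)
    have hn0 : 0 < (n : ℚ≥0) := lt_of_le_of_lt (by positivity) hn
    refine ⟨n, by exact_mod_cast Nat.one_le_iff_ne_zero.mpr (by rintro rfl; simp at hn0), ?_⟩
    rw [div_le_iff₀ hn0]
    calc (2 : ℚ≥0) ≤ n * ε := ((div_lt_iff₀ hε).mp hn).le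
      _ = ε * n := mul_comm _ _
  have hnF : ((n : F)) ≠ 0 := Nat.cast_ne_zero.mpr (by omega)
  -- the Fejér-type kernel
  set d : ℕ → ℕ := fun k => min k (2 * n - k) with hd
  set w : F := ∑ k ∈ Finset.range (2 * n + 1), (d k : F) * x ^ k with hwdef
  -- key inequality: 2 x w ≤ (x² + 1) w + 2 x^(n+1)
  have hK : 2 * x * w ≤ (x ^ 2 + 1) * w + 2 * x ^ (n + 1) := by
    have hL : 2 * x * w = ∑ k ∈ Finset.range (2 * n + 1), ((2 * d k : ℕ) : F) * x ^ (k + 1) := by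
      rw [hwdef, Finset.mul_sum]
      refine Finset.sum_congr rfl fun k _ => ?_
      push_cast; ring
    have hsq : x ^ 2 * w = ∑ k ∈ Finset.range (2 * n + 1), ((d (k - 1) : ℕ) : F) * x ^ (k + 1) := by
      rw [hwdef, Finset.mul_sum]
      have e1 : ∀ k, x ^ 2 * ((d k : F) * x ^ k) = (d k : F) * x ^ (k + 2) := by
        intro k; ring
      simp only [e1]
      rw [Finset.sum_range_succ, Finset.sum_range_succ']
      have hdtop : d (2 * n) = 0 := by simp [hd]
      have hdbot : d (1 - 1) = 0 := by simp [hd]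
      simp [hdtop, hdbot, show d 0 = 0 from by simp [hd], add_assoc]
    have hone : (1 : F) * w = ∑ k ∈ Finset.range (2 * n + 1), ((d (k + 1) : ℕ) : F) * x ^ (k + 1) := by
      rw [one_mul, hwdef]
      rw [Finset.sum_range_succ', Finset.sum_range_succ]
      have hdtop : d (2 * n + 1) = 0 := by simp [hd]
      have hdbot : d 0 = 0 := by simp [hd]
      simp [hdtop, hdbot]
    have hind : 2 * x ^ (n + 1)
        = ∑ k ∈ Finset.range (2 * n + 1), (((if k = n then 2 else 0 : ℕ)) : F) * x ^ (k + 1) := by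
      rw [Finset.sum_eq_single_of_mem n (Finset.mem_range.mpr (by omega))]
      · simp
      · intro b _ hb; simp [hb]
    have hR : (x ^ 2 + 1) * w + 2 * x ^ (n + 1)
        = ∑ k ∈ Finset.range (2 * n + 1),
            ((d (k - 1) + d (k + 1) + (if k = n then 2 else 0) : ℕ) : F) * x ^ (k + 1) := by
      rw [add_mul, hsq, hone, hind, ← Finset.sum_add_distrib, ← Finset.sum_add_distrib]
      refine Finset.sum_congr rfl fun k _ => ?_
      push_cast; ring
    rw [hL, hR]
    refine stmt7_sum_le_sum hadd _ _ _ fun k _ => ?_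
    refine hmono _ _ _ ?_
    simp only [hd]
    split_ifs <;> omega
  -- n x^n ≤ w
  have hnw : (n : F) * x ^ n ≤ w := by
    have hmem : n ∈ Finset.range (2 * n + 1) := Finset.mem_range.mpr (by omega)
    have : w = (d n : F) * x ^ n + ∑ k ∈ (Finset.range (2 * n + 1)).erase n, (d k : F) * x ^ k := by
      rw [hwdef]; exact (Finset.add_sum_erase _ _ hmem).symm
    have hdn : d n = n := by simp [hd]; omega
    rw [this, hdn]
    exact le_add_right _ _
  by_cases hw : w = 0
  · -- degenerate case: 1 ≤ 0
    have h10' : (1 : F) ≤ 0 := by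
      have := hmul _ _ ((n : F)⁻¹ * (x⁻¹) ^ n) hnw
      rw [hw, zero_mul] at this
      calc (1 : F) = (n : F) * x ^ n * ((n : F)⁻¹ * x⁻¹ ^ n) := by
            rw [show (n : F) * x ^ n * ((n : F)⁻¹ * x⁻¹ ^ n)
                = ((n : F) * (n : F)⁻¹) * (x * x⁻¹) ^ n from by rw [mul_pow]; ring,
              mul_inv_cancel₀ hnF, hxx, one_pow, mul_one]
        _ ≤ 0 := this
    calc (2 : F) = 1 + 1 := by norm_num
      _ ≤ 0 + 1 := hadd _ _ _ h10'
      _ = 1 := by rw [zero_add]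
      _ ≤ 0 := h10'
      _ ≤ x + x⁻¹ + (ε : F) := h0 _
  · have hww : w * w⁻¹ = 1 := mul_inv_cancel₀ hw
    -- divide hK by x w
    have hmain : (2 : F) ≤ x + x⁻¹ + 2 * (x ^ n * w⁻¹) := by
      have := hmul _ _ (w⁻¹ * x⁻¹) hK
      have hLs : 2 * x * w * (w⁻¹ * x⁻¹) = 2 := by
        rw [show 2 * x * w * (w⁻¹ * x⁻¹) = 2 * ((x * x⁻¹) * (w * w⁻¹)) from by ring,
          hxx, hww]; norm_num
      have hRs : ((x ^ 2 + 1) * w + 2 * x ^ (n + 1)) * (w⁻¹ * x⁻¹)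
          = x + x⁻¹ + 2 * (x ^ n * w⁻¹) := by
        rw [show ((x ^ 2 + 1) * w + 2 * x ^ (n + 1)) * (w⁻¹ * x⁻¹)
            = (x * (x * x⁻¹)) * (w * w⁻¹) + x⁻¹ * (w * w⁻¹)
              + 2 * ((x ^ n * (x * x⁻¹)) * w⁻¹) from by ring, hxx, hww]
        ring
      rwa [hLs, hRs] at this
    -- x^n w⁻¹ ≤ n⁻¹
    have hbound : x ^ n * w⁻¹ ≤ (n : F)⁻¹ := by
      have := hmul _ _ (w⁻¹ * (n : F)⁻¹) hnw
      have hLs : (n : F) * x ^ n * (w⁻¹ * (n : F)⁻¹) = x ^ n * w⁻¹ := by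
        rw [show (n : F) * x ^ n * (w⁻¹ * (n : F)⁻¹)
            = ((n : F) * (n : F)⁻¹) * (x ^ n * w⁻¹) from by ring, mul_inv_cancel₀ hnF, one_mul]
      have hRs : w * (w⁻¹ * (n : F)⁻¹) = (n : F)⁻¹ := by
        rw [← mul_assoc, hww, one_mul]
      rwa [hLs, hRs] at this
    have hbound2 : 2 * (x ^ n * w⁻¹) ≤ 2 * (n : F)⁻¹ := by
      have := hmul _ _ (2 : F) hbound
      rwa [mul_comm, mul_comm ((n:F)⁻¹)] at this
    -- 2/n ≤ ε in F
    have hcast : 2 * (n : F)⁻¹ ≤ (ε : F) := by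
      have hq : (2 : ℚ≥0) / n + (ε - (2 : ℚ≥0) / n) = ε := by
        rw [add_comm]; exact tsub_add_cancel_of_le hnε
      have : (ε : F) = 2 * (n : F)⁻¹ + ((ε - (2 : ℚ≥0) / n : ℚ≥0) : F) := by
        conv_lhs => rw [← hq]
        rw [NNRat.cast_add, NNRat.cast_div, NNRat.cast_ofNat, NNRat.cast_natCast, div_eq_mul_inv]
      rw [this]
      exact le_add_right _ _
    calc (2 : F) ≤ x + x⁻¹ + 2 * (x ^ n * w⁻¹) := hmain
      _ ≤ x + x⁻¹ + 2 * (n : F)⁻¹ := add_le_add_left' _ _ _ hbound2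
      _ ≤ x + x⁻¹ + (ε : F) := add_le_add_left' _ _ _ hcast
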